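/- Let ({\cal T}, ξ₀) be a rooted tree, 1 ≤ p ≤ q < ∞, g, v : V(T) → ℝ₊ weight functions, and suppose there exist a > 0, b > 0 such that for every vertex ξ and every j ≥ 0, ∑_{η ∈ V_j(ξ)} v(η)^q ≤ b·2^{-aj}·v(ξ)^q, where V_j(ξ) is the set of descendants of ξ at distance exactly j. Then the weighted summation operator S_{g,v}f(ξ) = v(ξ)·∑_{ξ' ≤ ξ} g(ξ')f(ξ') satisfies the bound ‖S_{g,v}‖_{ℓ^p → ℓ^q} ≤ C(a,b,p,q)·sup_{ξ ∈ V(T)} g(ξ)v(ξ). -/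

import Mathlib

open ENNReal

/-- Jensen/Hölder: `(∑ wᵢ yᵢ)^q ≤ (∑ wᵢ)^(q-1) * ∑ wᵢ yᵢ^q` for `q ≥ 1` in `ℝ≥0∞`. -/
lemma my_jensen_tsum {ι : Type*} {q : ℝ} (hq : 1 ≤ q) (w y : ι → ℝ≥0∞) :
    (∑' i, w i * y i) ^ q ≤ (∑' i, w i) ^ (q - 1) * ∑' i, w i * y i ^ q := by
  rcases eq_or_lt_of_le hq with h1 | h1
  · simp [← h1]
  · letI : MeasurableSpace ι := ⊤
    haveI : MeasurableSingletonClass ι := ⟨fun _ => trivial⟩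
    have hq0 : (0:ℝ) < q := lt_trans zero_lt_one h1
    have hconj : (Real.conjExponent q).HolderConjugate q :=
      (Real.HolderConjugate.conjExponent h1).symm
    set r := Real.conjExponent q with hr
    have hr0 : r ≠ 0 := hconj.ne_zero
    have key := ENNReal.lintegral_mul_le_Lp_mul_Lq (MeasureTheory.Measure.count (α := ι))
      hconj (f := fun i => w i ^ (1/r)) (g := fun i => w i ^ (1/q) * y i)
      measurable_from_top.aemeasurable measurable_from_top.aemeasurable
    rw [MeasureTheory.lintegral_count, MeasureTheory.lintegral_count,
      MeasureTheory.lintegral_count] at key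
    have e1 : ∀ i, ((fun i => w i ^ (1/r)) * fun i => w i ^ (1/q) * y i) i = w i * y i := by
      intro i
      simp only [Pi.mul_apply]
      rw [← mul_assoc, ← ENNReal.rpow_add_of_nonneg _ _ hconj.one_div_nonneg (by positivity)]
      rw [one_div, one_div, hconj.inv_add_inv_eq_one, ENNReal.rpow_one]
    have e2 : ∀ i, (w i ^ (1/r)) ^ r = w i := by
      intro i
      rw [← ENNReal.rpow_mul, one_div, inv_mul_cancel₀ hr0, ENNReal.rpow_one]
    have e3 : ∀ i, (w i ^ (1/q) * y i) ^ q = w i * y i ^ q := by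
      intro i
      rw [ENNReal.mul_rpow_of_nonneg _ _ hq0.le, ← ENNReal.rpow_mul, one_div,
        inv_mul_cancel₀ hq0.ne', ENNReal.rpow_one]
    simp only [e1, e2, e3] at key
    calc (∑' i, w i * y i) ^ q
        ≤ ((∑' i, w i) ^ (1/r) * (∑' i, w i * y i ^ q) ^ (1/q)) ^ q :=
          ENNReal.rpow_le_rpow key hq0.le
      _ = (∑' i, w i) ^ (q - 1) * ∑' i, w i * y i ^ q := by
          rw [ENNReal.mul_rpow_of_nonneg _ _ hq0.le, ← ENNReal.rpow_mul, ← ENNReal.rpow_mul,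
            one_div, one_div, inv_mul_cancel₀ hq0.ne', ENNReal.rpow_one]
          congr 2
          rw [mul_comm]
          have := hconj.symm.div_conj_eq_sub_one
          rw [div_eq_mul_inv] at this
          rw [this]

/-- ℓ^p norms are monotone decreasing in p (counting measure). -/
lemma my_lp_mono {ι : Type*} {p q : ℝ} (hp : 0 < p) (hpq : p ≤ q) (f : ι → ℝ≥0∞) :
    (∑' i, f i ^ q) ^ (1/q) ≤ (∑' i, f i ^ p) ^ (1/p) := by
  have hq : (0:ℝ) < q := hp.trans_le hpq
  set S := ∑' i, f i ^ p with hS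
  have key : ∑' i, f i ^ q ≤ S ^ (q/p) := by
    by_cases hStop : S = ∞
    · rw [hStop, ENNReal.top_rpow_of_pos (by positivity)]; exact le_top
    by_cases hS0 : S = 0
    · have hz : ∀ i, f i = 0 := by
        intro i
        have h1 : f i ^ p = 0 := by
          have := ENNReal.le_tsum (f := fun i => f i ^ p) i
          rw [← hS, hS0] at this
          exact le_antisymm this zero_le
        have := ENNReal.rpow_eq_zero_iff.mp h1
        rcases this with ⟨h, _⟩ | ⟨_, h⟩
        · exact h
        · linarith
      simp only [hz, ENNReal.zero_rpow_of_pos hq, tsum_zero, hS0]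
      exact zero_le
    · have h1 : ∀ i, f i ^ q = (f i ^ p) ^ (q/p) := by
        intro i
        rw [← ENNReal.rpow_mul]
        congr 1
        field_simp
      calc ∑' i, f i ^ q = ∑' i, (f i ^ p) ^ (q/p) := by simp only [h1]
        _ ≤ ∑' i, S ^ (q/p - 1) * f i ^ p := by
            refine ENNReal.tsum_le_tsum fun i => ?_
            have hle : f i ^ p ≤ S := ENNReal.le_tsum i
            calc (f i ^ p) ^ (q/p) = (f i ^ p) ^ (q/p - 1) * (f i ^ p) ^ (1:ℝ) := by
                  rw [← ENNReal.rpow_add_of_nonneg _ _ (by rw [le_sub_iff_add_le, zero_add, le_div_iff₀ hp, one_mul]; exact hpq) zero_le_one]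
                  norm_num
              _ ≤ S ^ (q/p - 1) * f i ^ p := by
                  rw [ENNReal.rpow_one]
                  exact mul_le_mul' (ENNReal.rpow_le_rpow hle (by rw [le_sub_iff_add_le, zero_add, le_div_iff₀ hp, one_mul]; exact hpq)) le_rfl
        _ = S ^ (q/p - 1) * S := ENNReal.tsum_mul_left
        _ = S ^ (q/p) := by
            nth_rewrite 2 [← ENNReal.rpow_one S]
            rw [← ENNReal.rpow_add_of_nonneg _ _
              (by rw [le_sub_iff_add_le, zero_add, le_div_iff₀ hp, one_mul]; exact hpq) zero_le_one,
              sub_add_cancel]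
  calc (∑' i, f i ^ q) ^ (1/q) ≤ (S ^ (q/p)) ^ (1/q) :=
        ENNReal.rpow_le_rpow key (by positivity)
    _ = S ^ (1/p) := by
        rw [← ENNReal.rpow_mul]
        congr 1
        field_simp

section Tree
variable {V : Type*} (root : V) (parent : V → V) (depth : V → ℕ)

lemma my_depth_iter (hdepth0 : depth root = 0)
    (hdepth : ∀ w : V, w ≠ root → depth w = depth (parent w) + 1) :
    ∀ k (ξ : V), k ≤ depth ξ → depth (parent^[k] ξ) + k = depth ξ := by
  intro k
  induction k with
  | zero => intro ξ _; simp
  | succ k ih =>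
    intro ξ hk
    have hne : ξ ≠ root := by
      intro h; rw [h, hdepth0] at hk; omega
    have hd := hdepth ξ hne
    have hk' : k ≤ depth (parent ξ) := by omega
    have := ih (parent ξ) hk'
    rw [Function.iterate_succ_apply]
    omega

lemma my_depth_zero (hdepth : ∀ w : V, w ≠ root → depth w = depth (parent w) + 1) :
    ∀ w : V, depth w = 0 → w = root := by
  intro w hw
  by_contra h
  rw [hdepth w h] at hw
  omega

lemma my_anc_canon (hroot : parent root = root) (hdepth0 : depth root = 0)
    (hdepth : ∀ w : V, w ≠ root → depth w = depth (parent w) + 1)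
    (ξ η : V) (h : ∃ n : ℕ, parent^[n] ξ = η) :
    parent^[depth ξ - depth η] ξ = η ∧ depth ξ = depth η + (depth ξ - depth η) := by
  obtain ⟨n, hn⟩ := h
  have hroot_it : parent^[depth ξ] ξ = root := by
    have := my_depth_iter root parent depth hdepth0 hdepth (depth ξ) ξ le_rfl
    exact my_depth_zero root parent depth hdepth _ (by omega)
  by_cases hnle : n ≤ depth ξ
  · have := my_depth_iter root parent depth hdepth0 hdepth n ξ hnle
    rw [hn] at this
    have hj : depth ξ - depth η = n := by omega
    rw [hj]
    exact ⟨hn, by omega⟩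
  · have hη : η = root := by
      have : parent^[n] ξ = parent^[n - depth ξ] (parent^[depth ξ] ξ) := by
        rw [← Function.iterate_add_apply]
        congr 1
        omega
      rw [hroot_it, Function.iterate_fixed hroot] at this
      rw [← hn, this]
    subst hη
    rw [hdepth0]
    exact ⟨by simpa using hroot_it, by omega⟩

/-- The reindexing equivalence: pairs (vertex, ancestor) ≃ (vertex, distance, descendant). -/
noncomputable def myEquiv (hroot : parent root = root) (hdepth0 : depth root = 0)
    (hdepth : ∀ w : V, w ≠ root → depth w = depth (parent w) + 1) :
    (Σ ξ : V, {η : V // ∃ n : ℕ, parent^[n] ξ = η}) ≃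
    (Σ η : V, Σ j : ℕ, {ξ : V // parent^[j] ξ = η ∧ depth ξ = depth η + j}) where
  toFun x := ⟨x.2.1, depth x.1 - depth x.2.1, x.1,
    (my_anc_canon root parent depth hroot hdepth0 hdepth x.1 x.2.1 x.2.2).1,
    (my_anc_canon root parent depth hroot hdepth0 hdepth x.1 x.2.1 x.2.2).2⟩
  invFun y := ⟨y.2.2.1, y.1, ⟨y.2.1, y.2.2.2.1⟩⟩
  left_inv x := rfl
  right_inv := by
    rintro ⟨η, j, ξ, h1, h2⟩
    have hj : depth ξ - depth η = j := by omega
    subst hj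
    rfl

end Tree

theorem stmt5 {V : Type*} (root : V) (parent : V → V)
    (hroot : parent root = root)
    (hreach : ∀ w : V, ∃ n : ℕ, parent^[n] w = root)
    (depth : V → ℕ) (hdepth0 : depth root = 0)
    (hdepth : ∀ w : V, w ≠ root → depth w = depth (parent w) + 1)
    (p q : ℝ) (hp : 1 ≤ p) (hpq : p ≤ q)
    (g v : V → ℝ≥0∞)
    (a b : ℝ) (ha : 0 < a) (hb : 0 < b)
    (hsum : ∀ ξ : V, ∀ j : ℕ,
      ∑' η : {η : V // parent^[j] η = ξ ∧ depth η = depth ξ + j}, v (η : V) ^ q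
        ≤ ENNReal.ofReal (b * 2 ^ (-a * (j : ℝ))) * v ξ ^ q) :
    ∃ C > (0:ℝ), ∀ M : ℝ≥0∞, (∀ ξ : V, g ξ * v ξ ≤ M) →
      ∀ f : V → ℝ≥0∞,
        (∑' ξ : V, (v ξ * ∑' η : {η : V // ∃ n : ℕ, parent^[n] ξ = η}, g (η : V) * f (η : V)) ^ q)
            ^ (1/q)
          ≤ ENNReal.ofReal C * M * (∑' ξ : V, f ξ ^ p) ^ (1/p) := by
  classical
  have hq1 : (1:ℝ) ≤ q := hp.trans hpq
  have hq0 : (0:ℝ) < q := lt_of_lt_of_le one_pos hq1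
  have hp0 : (0:ℝ) < p := lt_of_lt_of_le one_pos hp
  set s : ℝ≥0∞ := ENNReal.ofReal ((2:ℝ) ^ (-(a/q))) with hs_def
  have hs0 : s ≠ 0 := by
    simp only [hs_def, ne_eq, ENNReal.ofReal_eq_zero, not_le]
    positivity
  have hstop : s ≠ ∞ := ENNReal.ofReal_ne_top
  have hs1 : s < 1 := by
    rw [hs_def, ← ENNReal.ofReal_one]
    exact (ENNReal.ofReal_lt_ofReal_iff one_pos).mpr
      (Real.rpow_lt_one_of_one_lt_of_neg one_lt_two (neg_lt_zero.mpr (by positivity)))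
  set U : ℝ≥0∞ := (1 - s)⁻¹ with hU_def
  have hUgeom : ∑' j : ℕ, s ^ (j : ℝ) = U := by
    rw [hU_def, ← ENNReal.tsum_geometric]
    exact tsum_congr fun j => ENNReal.rpow_natCast s j
  have hUtop : U ≠ ∞ := by
    rw [hU_def]
    simp only [ne_eq, ENNReal.inv_eq_top]
    exact (tsub_pos_of_lt hs1).ne'
  have hU0 : U ≠ 0 := by
    rw [hU_def]
    simp only [ne_eq, ENNReal.inv_eq_zero]
    exact (lt_of_le_of_lt tsub_le_self one_lt_top).ne
  set β : ℝ≥0∞ := ENNReal.ofReal b with hβ_def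
  have hβtop : β ≠ ∞ := ENNReal.ofReal_ne_top
  have hsum' : ∀ (η : V) (j : ℕ),
      ∑' ξ : {ξ : V // parent^[j] ξ = η ∧ depth ξ = depth η + j}, v (ξ:V) ^ q
        ≤ β * s ^ ((j:ℝ) * q) * v η ^ q := by
    intro η j
    have hre : ENNReal.ofReal (b * 2 ^ (-a * (j:ℝ))) = β * s ^ ((j:ℝ) * q) := by
      rw [ENNReal.ofReal_mul hb.le, hβ_def]
      congr 1
      have hexp : -(a/q) * ((j:ℝ) * q) = -a * (j:ℝ) := by
        field_simp
      rw [hs_def, ENNReal.ofReal_rpow_of_pos (by positivity),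
        ← Real.rpow_mul (by norm_num : (0:ℝ) ≤ 2), hexp]
    rw [← hre]
    exact hsum η j
  set K : ℝ≥0∞ := U * β ^ (1/q : ℝ) with hK_def
  have hKtop : K ≠ ∞ :=
    ENNReal.mul_ne_top hUtop (ENNReal.rpow_ne_top_of_nonneg (by positivity) hβtop)
  refine ⟨K.toReal + 1, by positivity, ?_⟩
  intro M hM f
  set F : V → V → ℝ≥0∞ := fun ξ η =>
    s ^ (((depth ξ - depth η : ℕ) : ℝ) * (1 - q)) * (v ξ * (g η * f η)) ^ q with hF_def
  have stepA : ∀ ξ : V,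
      (v ξ * ∑' η : {η : V // ∃ n : ℕ, parent^[n] ξ = η}, g (η:V) * f (η:V)) ^ q
        ≤ U ^ (q - 1) * ∑' η : {η : V // ∃ n : ℕ, parent^[n] ξ = η}, F ξ (η:V) := by
    intro ξ
    rw [← ENNReal.tsum_mul_left]
    have hgeom_le :
        ∑' η : {η : V // ∃ n : ℕ, parent^[n] ξ = η},
          s ^ (((depth ξ - depth (η:V) : ℕ)):ℝ) ≤ U := by
      have hinj : Function.Injective
          (fun η : {η : V // ∃ n : ℕ, parent^[n] ξ = η} => depth ξ - depth (η:V)) := by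
        intro η η' hh
        have h1 := (my_anc_canon root parent depth hroot hdepth0 hdepth ξ η η.2).1
        have h2 := (my_anc_canon root parent depth hroot hdepth0 hdepth ξ η' η'.2).1
        apply Subtype.ext
        simp only at hh
        rw [← h1, ← h2, hh]
      calc ∑' η : {η : V // ∃ n : ℕ, parent^[n] ξ = η}, s ^ (((depth ξ - depth (η:V) : ℕ)):ℝ)
          ≤ ∑' j : ℕ, s ^ (j:ℝ) := tsum_comp_le_tsum_of_injective hinj (fun j : ℕ => s ^ (j:ℝ))
        _ = U := hUgeom
    have hwy : ∀ η : {η : V // ∃ n : ℕ, parent^[n] ξ = η},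
        v ξ * (g (η:V) * f (η:V)) = s ^ (((depth ξ - depth (η:V) : ℕ)):ℝ) *
          (s ^ (-((depth ξ - depth (η:V) : ℕ):ℝ)) * (v ξ * (g (η:V) * f (η:V)))) := by
      intro η
      conv_rhs => rw [← mul_assoc, ← ENNReal.rpow_add _ _ hs0 hstop]
      simp
    have hterm : ∀ η : {η : V // ∃ n : ℕ, parent^[n] ξ = η},
        s ^ (((depth ξ - depth (η:V) : ℕ)):ℝ) *
          (s ^ (-((depth ξ - depth (η:V) : ℕ):ℝ)) * (v ξ * (g (η:V) * f (η:V)))) ^ q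
        = F ξ (η:V) := by
      intro η
      simp only [hF_def]
      rw [ENNReal.mul_rpow_of_nonneg _ _ hq0.le, ← ENNReal.rpow_mul,
        ← mul_assoc, ← ENNReal.rpow_add _ _ hs0 hstop]
      congr 2
      ring
    calc (∑' η : {η : V // ∃ n : ℕ, parent^[n] ξ = η}, v ξ * (g (η:V) * f (η:V))) ^ q
        = (∑' η : {η : V // ∃ n : ℕ, parent^[n] ξ = η},
            s ^ (((depth ξ - depth (η:V) : ℕ)):ℝ) *
              (s ^ (-((depth ξ - depth (η:V) : ℕ):ℝ)) * (v ξ * (g (η:V) * f (η:V))))) ^ q := by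
          rw [tsum_congr hwy]
      _ ≤ (∑' η : {η : V // ∃ n : ℕ, parent^[n] ξ = η},
            s ^ (((depth ξ - depth (η:V) : ℕ)):ℝ)) ^ (q - 1) *
          ∑' η : {η : V // ∃ n : ℕ, parent^[n] ξ = η},
            s ^ (((depth ξ - depth (η:V) : ℕ)):ℝ) *
              (s ^ (-((depth ξ - depth (η:V) : ℕ):ℝ)) * (v ξ * (g (η:V) * f (η:V)))) ^ q :=
          my_jensen_tsum hq1 _ _
      _ ≤ U ^ (q - 1) *
          ∑' η : {η : V // ∃ n : ℕ, parent^[n] ξ = η},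
            s ^ (((depth ξ - depth (η:V) : ℕ)):ℝ) *
              (s ^ (-((depth ξ - depth (η:V) : ℕ):ℝ)) * (v ξ * (g (η:V) * f (η:V)))) ^ q :=
          mul_le_mul' (ENNReal.rpow_le_rpow hgeom_le (by linarith)) le_rfl
      _ = U ^ (q - 1) * ∑' η : {η : V // ∃ n : ℕ, parent^[n] ξ = η}, F ξ (η:V) := by
          rw [tsum_congr hterm]
  have fubini : ∑' ξ : V, ∑' η : {η : V // ∃ n : ℕ, parent^[n] ξ = η}, F ξ (η:V)
      = ∑' η : V, ∑' j : ℕ,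
          ∑' ξ : {ξ : V // parent^[j] ξ = η ∧ depth ξ = depth η + j}, F (ξ:V) η := by
    calc ∑' ξ : V, ∑' η : {η : V // ∃ n : ℕ, parent^[n] ξ = η}, F ξ (η:V)
        = ∑' x : (Σ ξ : V, {η : V // ∃ n : ℕ, parent^[n] ξ = η}), F x.1 (x.2 : V) :=
          (ENNReal.tsum_sigma' (fun x : (Σ ξ : V, {η : V // ∃ n : ℕ, parent^[n] ξ = η}) =>
            F x.1 (x.2 : V))).symm
      _ = ∑' y : (Σ η : V, Σ j : ℕ, {ξ : V // parent^[j] ξ = η ∧ depth ξ = depth η + j}),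
            F (y.2.2 : V) y.1 :=
          Equiv.tsum_eq (myEquiv root parent depth hroot hdepth0 hdepth)
            (fun y => F (y.2.2 : V) y.1)
      _ = ∑' η : V, ∑' z : (Σ j : ℕ, {ξ : V // parent^[j] ξ = η ∧ depth ξ = depth η + j}),
            F (z.2 : V) η :=
          ENNReal.tsum_sigma'
            (fun y : (Σ η : V, Σ j : ℕ, {ξ : V // parent^[j] ξ = η ∧ depth ξ = depth η + j}) =>
              F (y.2.2 : V) y.1)
      _ = ∑' η : V, ∑' j : ℕ,
            ∑' ξ : {ξ : V // parent^[j] ξ = η ∧ depth ξ = depth η + j}, F (ξ:V) η :=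
          tsum_congr fun η => ENNReal.tsum_sigma'
            (fun z : (Σ j : ℕ, {ξ : V // parent^[j] ξ = η ∧ depth ξ = depth η + j}) =>
              F (z.2 : V) η)
  have stepC : ∀ η : V,
      ∑' j : ℕ, ∑' ξ : {ξ : V // parent^[j] ξ = η ∧ depth ξ = depth η + j}, F (ξ:V) η
        ≤ U * (β * ((g η * v η) ^ q * f η ^ q)) := by
    intro η
    have hterm : ∀ j : ℕ,
        ∑' ξ : {ξ : V // parent^[j] ξ = η ∧ depth ξ = depth η + j}, F (ξ:V) η
          ≤ s ^ (j:ℝ) * (β * ((g η * v η) ^ q * f η ^ q)) := by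
      intro j
      have hFeq : ∀ ξ : {ξ : V // parent^[j] ξ = η ∧ depth ξ = depth η + j},
          F (ξ:V) η = s ^ ((j:ℝ) * (1-q)) * ((g η * f η) ^ q * v (ξ:V) ^ q) := by
        intro ξ
        simp only [hF_def]
        have hd : ((depth (ξ:V) - depth η : ℕ) : ℝ) = (j:ℝ) := by
          have h2 := ξ.2.2
          have : depth (ξ:V) - depth η = j := by omega
          exact_mod_cast congrArg Nat.cast this
        rw [hd, ENNReal.mul_rpow_of_nonneg _ _ hq0.le]
        ring
      have hss : s ^ ((j:ℝ) * (1-q)) * s ^ ((j:ℝ) * q) = s ^ ((j:ℝ)) := by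
        rw [← ENNReal.rpow_add _ _ hs0 hstop]
        congr 1
        ring
      calc ∑' ξ : {ξ : V // parent^[j] ξ = η ∧ depth ξ = depth η + j}, F (ξ:V) η
          = s ^ ((j:ℝ) * (1-q)) * ((g η * f η) ^ q *
              ∑' ξ : {ξ : V // parent^[j] ξ = η ∧ depth ξ = depth η + j}, v (ξ:V) ^ q) := by
            rw [tsum_congr hFeq, ENNReal.tsum_mul_left, ENNReal.tsum_mul_left]
        _ ≤ s ^ ((j:ℝ) * (1-q)) * ((g η * f η) ^ q * (β * s ^ ((j:ℝ) * q) * v η ^ q)) :=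
            mul_le_mul' le_rfl (mul_le_mul' le_rfl (hsum' η j))
        _ = s ^ (j:ℝ) * (β * ((g η * v η) ^ q * f η ^ q)) := by
            rw [ENNReal.mul_rpow_of_nonneg (g η) (f η) hq0.le,
              ENNReal.mul_rpow_of_nonneg (g η) (v η) hq0.le, ← hss]
            ring
    calc ∑' j : ℕ, ∑' ξ : {ξ : V // parent^[j] ξ = η ∧ depth ξ = depth η + j}, F (ξ:V) η
        ≤ ∑' j : ℕ, s ^ (j:ℝ) * (β * ((g η * v η) ^ q * f η ^ q)) :=
          ENNReal.tsum_le_tsum hterm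
      _ = (∑' j : ℕ, s ^ (j:ℝ)) * (β * ((g η * v η) ^ q * f η ^ q)) := ENNReal.tsum_mul_right
      _ = U * (β * ((g η * v η) ^ q * f η ^ q)) := by rw [hUgeom]
  have main : ∑' ξ : V,
      (v ξ * ∑' η : {η : V // ∃ n : ℕ, parent^[n] ξ = η}, g (η:V) * f (η:V)) ^ q
        ≤ U ^ q * β * M ^ q * ∑' η : V, f η ^ q := by
    calc ∑' ξ : V, (v ξ * ∑' η : {η : V // ∃ n : ℕ, parent^[n] ξ = η}, g (η:V) * f (η:V)) ^ q
        ≤ ∑' ξ : V, U ^ (q - 1) * ∑' η : {η : V // ∃ n : ℕ, parent^[n] ξ = η}, F ξ (η:V) :=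
          ENNReal.tsum_le_tsum stepA
      _ = U ^ (q - 1) * ∑' ξ : V, ∑' η : {η : V // ∃ n : ℕ, parent^[n] ξ = η}, F ξ (η:V) :=
          ENNReal.tsum_mul_left
      _ = U ^ (q - 1) * ∑' η : V, ∑' j : ℕ,
            ∑' ξ : {ξ : V // parent^[j] ξ = η ∧ depth ξ = depth η + j}, F (ξ:V) η := by
          rw [fubini]
      _ ≤ U ^ (q - 1) * ∑' η : V, U * (β * ((g η * v η) ^ q * f η ^ q)) :=
          mul_le_mul' le_rfl (ENNReal.tsum_le_tsum stepC)
      _ ≤ U ^ (q - 1) * ∑' η : V, U * (β * (M ^ q * f η ^ q)) := by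
          refine mul_le_mul' le_rfl (ENNReal.tsum_le_tsum fun η => ?_)
          exact mul_le_mul' le_rfl (mul_le_mul' le_rfl
            (mul_le_mul' (ENNReal.rpow_le_rpow (hM η) hq0.le) le_rfl))
      _ = U ^ (q - 1) * (U * (β * (M ^ q * ∑' η : V, f η ^ q))) := by
          rw [ENNReal.tsum_mul_left, ENNReal.tsum_mul_left, ENNReal.tsum_mul_left]
      _ = U ^ q * β * M ^ q * ∑' η : V, f η ^ q := by
          have hUU : U ^ (q - 1) * U = U ^ q := by
            nth_rewrite 2 [← ENNReal.rpow_one U]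
            rw [← ENNReal.rpow_add _ _ hU0 hUtop]
            congr 1
            ring
          rw [← hUU]
          ring
  calc (∑' ξ : V, (v ξ * ∑' η : {η : V // ∃ n : ℕ, parent^[n] ξ = η}, g (η:V) * f (η:V)) ^ q)
        ^ (1/q)
      ≤ (U ^ q * β * M ^ q * ∑' η : V, f η ^ q) ^ (1/q) :=
        ENNReal.rpow_le_rpow main (by positivity)
    _ = K * M * (∑' η : V, f η ^ q) ^ (1/q) := by
        rw [ENNReal.mul_rpow_of_nonneg _ _ (by positivity : (0:ℝ) ≤ 1/q),
          ENNReal.mul_rpow_of_nonneg _ _ (by positivity : (0:ℝ) ≤ 1/q),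
          ENNReal.mul_rpow_of_nonneg _ _ (by positivity : (0:ℝ) ≤ 1/q),
          ← ENNReal.rpow_mul U, ← ENNReal.rpow_mul M,
          mul_one_div_cancel hq0.ne', ENNReal.rpow_one, ENNReal.rpow_one, hK_def]
    _ ≤ K * M * (∑' ξ : V, f ξ ^ p) ^ (1/p) :=
        mul_le_mul' le_rfl (my_lp_mono hp0 hpq f)
    _ ≤ ENNReal.ofReal (K.toReal + 1) * M * (∑' ξ : V, f ξ ^ p) ^ (1/p) := by
        have hK : K ≤ ENNReal.ofReal (K.toReal + 1) := by
          calc K = ENNReal.ofReal K.toReal := (ENNReal.ofReal_toReal hKtop).symm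
            _ ≤ ENNReal.ofReal (K.toReal + 1) := ENNReal.ofReal_le_ofReal (by linarith)
        exact mul_le_mul' (mul_le_mul' hK le_rfl) le_rfl
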